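/- arXiv:2507.20201 — 3 statements merged into one kernel-verified Lean document; each statement's English description precedes it below -/
import Mathlib

section
/- Let P ⊆ ℤ² be finite with connected induced subgraph, p ∈ P, and v ∉ P a vertex adjacent to p. If every vertex of N(p) (occupied neighbours of p) is connected to v within the induced subgraph on ((P ∖ {p}) ∩ (N(p) ∪ neighbours of v)) ∪ {v}, then the induced subgraph on (P ∖ {p}) ∪ {v} is connected. -/
/-- The six direction vectors of the triangular grid. -/
def dirs : Finset (ℤ × ℤ) := {(1,0), (-1,0), (0,1), (0,-1), (1,-1), (-1,1)}

/-- The infinite triangular grid on `ℤ²`. -/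
def triGrid : SimpleGraph (ℤ × ℤ) :=
  SimpleGraph.fromRel (fun v w => (w.1 - v.1, w.2 - v.2) ∈ dirs)

private lemma induce_reachable_mono {V : Type*} {G : SimpleGraph V} {A B : Set V} (h : A ⊆ B)
    {a b : A} (hr : (G.induce A).Reachable a b) :
    (G.induce B).Reachable ⟨a, h a.2⟩ ⟨b, h b.2⟩ :=
  hr.map ⟨Set.inclusion h, fun hadj => hadj⟩

private lemma walk_avoid {V : Type*} {G : SimpleGraph V} {A B : Set V}
    {a b : A} (W : (G.induce A).Walk a b)
    (h : ∀ x ∈ W.support, (x : A).1 ∈ B) :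
    (G.induce B).Reachable ⟨a, h a W.start_mem_support⟩ ⟨b, h b W.end_mem_support⟩ := by
  induction W with
  | nil => exact SimpleGraph.Reachable.refl _
  | @cons u c w hadj rest ih =>
    exact SimpleGraph.Reachable.trans
      (SimpleGraph.Adj.reachable
        (show (G.induce B).Adj ⟨u.1, h u (by simp)⟩ ⟨c.1, h c (by simp)⟩ from hadj))
      (ih fun x hx => h x (by simp [hx]))

private lemma exists_cons {V : Type*} {G : SimpleGraph V} {a b : V} (hne : a ≠ b)
    (W : G.Walk a b) :
    ∃ c, ∃ h : G.Adj a c, ∃ rest : G.Walk c b, W = SimpleGraph.Walk.cons h rest := by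
  cases W with
  | nil => exact absurd rfl hne
  | cons h rest => exact ⟨_, h, rest, rfl⟩

/-- A contracted particle moving from `p` to an adjacent empty node `v` preserves global
connectivity provided every occupied neighbour of `p` is connected to `v` inside the local
region `((P \ {p}) ∩ (N(p) ∪ N(v))) ∪ {v}`. -/
theorem move_keeps_connected (P : Set (ℤ × ℤ)) (hfin : P.Finite)
    (hconn : (triGrid.induce P).Connected) (p : ℤ × ℤ) (hp : p ∈ P)
    (v : ℤ × ℤ) (hv : v ∉ P) (hadj : triGrid.Adj p v)
    (hreach : ∀ q (hq : q ∈ ((P \ {p}) ∩ (triGrid.neighborSet p ∪ triGrid.neighborSet v)) ∪ {v}),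
      q ∈ P → triGrid.Adj p q →
      (triGrid.induce (((P \ {p}) ∩ (triGrid.neighborSet p ∪ triGrid.neighborSet v)) ∪ {v})).Reachable
        ⟨q, hq⟩ ⟨v, by simp⟩) :
    (triGrid.induce ((P \ {p}) ∪ {v})).Connected := by
  classical
  set L : Set (ℤ × ℤ) :=
    ((P \ {p}) ∩ (triGrid.neighborSet p ∪ triGrid.neighborSet v)) ∪ {v} with hL
  set S : Set (ℤ × ℤ) := (P \ {p}) ∪ {v} with hS
  have hvS : v ∈ S := Or.inr rfl
  have hLS : L ⊆ S := by
    rintro z (⟨hz1, _⟩ | hz2)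
    · exact Or.inl hz1
    · exact Or.inr hz2
  -- main claim: every x ∈ P, x ≠ p, reaches v in induce S
  have key : ∀ x (hxS : x ∈ S) (hxP : x ∈ P), x ≠ p →
      (triGrid.induce S).Reachable ⟨x, hxS⟩ ⟨v, hvS⟩ := by
    intro x hxS hxP hxne
    obtain ⟨W⟩ := hconn.preconnected ⟨x, hxP⟩ ⟨p, hp⟩
    have hpmem : (⟨p, hp⟩ : P) ∈ W.support := W.end_mem_support
    have hcount : (W.takeUntil _ hpmem).support.count (⟨p, hp⟩ : P) = 1 :=
      by convert W.count_support_takeUntil_eq_one hpmem using 2; exact lawful_beq_subsingleton _ _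
    set Wr := (W.takeUntil _ hpmem).reverse with hWr
    have hne : (⟨p, hp⟩ : P) ≠ ⟨x, hxP⟩ := by
      intro hEq
      exact hxne (congrArg Subtype.val hEq.symm)
    obtain ⟨q, hpq, rest, hWeq⟩ := exists_cons hne Wr
    have hcount' : Wr.support.count (⟨p, hp⟩ : P) = 1 := by
      rw [hWr, SimpleGraph.Walk.support_reverse, List.count_reverse]
      exact hcount
    have hpnotin : (⟨p, hp⟩ : P) ∉ rest.support := by
      rw [hWeq, SimpleGraph.Walk.support_cons, List.count_cons_self] at hcount'
      have : rest.support.count (⟨p, hp⟩ : P) = 0 := by omega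
      exact List.count_eq_zero.mp this
    -- adjacency data on q
    have hadjG : triGrid.Adj p q.1 := hpq
    have hqne : q.1 ≠ p := fun h => triGrid.irrefl (h ▸ hadjG)
    -- rest avoids p, so it lives in S
    have hrest : ∀ y ∈ rest.support, (y : P).1 ∈ S := by
      intro y hy
      have hyne : (y : P).1 ≠ p := by
        intro hEq
        exact hpnotin (by rwa [show y = ⟨p, hp⟩ from Subtype.ext hEq] at hy)
      exact Or.inl ⟨y.2, hyne⟩
    have hqx : (triGrid.induce S).Reachable ⟨q.1, hrest q rest.start_mem_support⟩
        ⟨x, hrest _ rest.end_mem_support⟩ := walk_avoid rest hrest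
    -- q reaches v inside L, hence inside S
    have hqL : q.1 ∈ L := Or.inl ⟨⟨q.2, hqne⟩, Or.inl hadjG⟩
    have hqv : (triGrid.induce L).Reachable ⟨q.1, hqL⟩ ⟨v, Or.inr rfl⟩ :=
      hreach q.1 hqL q.2 hadjG
    have hqvS : (triGrid.induce S).Reachable ⟨q.1, hLS hqL⟩ ⟨v, hvS⟩ :=
      induce_reachable_mono hLS hqv
    exact hqx.symm.trans hqvS
  rw [SimpleGraph.connected_iff]
  refine ⟨?_, ⟨⟨v, hvS⟩⟩⟩
  have reachv : ∀ a : S, (triGrid.induce S).Reachable a ⟨v, hvS⟩ := by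
    rintro ⟨a, (⟨haP, hane⟩ | hav)⟩
    · exact key a (Or.inl ⟨haP, hane⟩) haP hane
    · subst hav
      exact SimpleGraph.Reachable.refl _
  intro a b
  exact (reachv a).trans (reachv b).symm
end

section
/- Let P ⊆ ℤ² be a finite nonempty set of contracted particles in the triangular grid such that every p ∈ P has either zero or two occupied lower neighbours (the lower neighbours of (x,y) being (x,y-1) and (x+1,y-1), with 'lower' meaning smaller second coordinate), and the induced subgraph on P is connected. Then there exists exactly one p ∈ P such that the nodes in directions 0, 1, 2 and 5 of p (i.e., p+(1,0), p+(1,-1), p+(0,-1), p+(0,1) in suitable coordinates) are all unoccupied. -/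
/-- The two lower neighbours of a vertex in axial coordinates. -/
def lowNbr1 (p : ℤ × ℤ) : ℤ × ℤ := (p.1, p.2 - 1)
def lowNbr2 (p : ℤ × ℤ) : ℤ × ℤ := (p.1 + 1, p.2 - 1)

/-- Every particle has either zero or two occupied lower neighbours. -/
def ZeroOrTwoLower (P : Set (ℤ × ℤ)) : Prop :=
  ∀ p ∈ P, (lowNbr1 p ∈ P ∧ lowNbr2 p ∈ P) ∨ (lowNbr1 p ∉ P ∧ lowNbr2 p ∉ P)

/-- A leader: a particle with no occupied neighbour in directions 0, 1, 2 and 5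
(direction 0 = `(1,0)`, direction 1 = `(1,-1)`, direction 2 = `(0,-1)`, and direction 5
is the upper neighbour `(0,1)` whose other lower neighbour is the direction-0 node). -/
def IsLeader (P : Set (ℤ × ℤ)) (p : ℤ × ℤ) : Prop :=
  p ∈ P ∧ (p.1 + 1, p.2) ∉ P ∧ (p.1 + 1, p.2 - 1) ∉ P ∧
    (p.1, p.2 - 1) ∉ P ∧ (p.1, p.2 + 1) ∉ P

lemma adj_iff (a b : ℤ × ℤ) : triGrid.Adj a b ↔
    (b = (a.1+1, a.2) ∨ b = (a.1-1, a.2) ∨ b = (a.1, a.2+1) ∨ b = (a.1, a.2-1) ∨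
     b = (a.1+1, a.2-1) ∨ b = (a.1-1, a.2+1)) := by
  simp [triGrid, dirs, SimpleGraph.fromRel_adj, Prod.ext_iff]
  omega

lemma walk_surgery {V : Type*} (G : SimpleGraph V) (P : Set V) (q : V)
    (H : ∀ (a b : V) (ha : a ∈ P \ {q}) (hb : b ∈ P \ {q}), G.Adj a q → G.Adj b q →
      (G.induce (P \ {q})).Reachable ⟨a, ha⟩ ⟨b, hb⟩) :
    ∀ (n : ℕ) (u w : P) (p : (G.induce P).Walk u w), p.length ≤ n →
      ∀ (hu : (u : V) ∈ P \ {q}) (hw : (w : V) ∈ P \ {q}),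
      (G.induce (P \ {q})).Reachable ⟨u, hu⟩ ⟨w, hw⟩ := by
  intro n
  induction n with
  | zero =>
    intro u w p hl hu hw
    cases p with
    | nil => exact SimpleGraph.Reachable.refl _
    | cons h p' => simp [SimpleGraph.Walk.length_cons] at hl
  | succ n ih =>
    intro u w p hl hu hw
    cases p with
    | nil => exact SimpleGraph.Reachable.refl _
    | cons h p' =>
      rename_i v
      rw [SimpleGraph.Walk.length_cons] at hl
      by_cases hv : (v : V) = q
      · cases p' with
        | nil =>
          exact absurd hv hw.2
        | cons h2 p'' =>
          rename_i v'
          rw [SimpleGraph.Walk.length_cons] at hl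
          have hadj2 : G.Adj (v : V) (v' : V) := h2
          have hv' : (v' : V) ∈ P \ {q} := ⟨v'.2, by
            intro hq
            have hq' : (v' : V) = q := hq
            rw [hv, hq'] at hadj2
            exact G.irrefl hadj2⟩
          have hadj1 : G.Adj (u : V) (v : V) := h
          have r1 := H u v' hu hv' (hv ▸ hadj1) ((hv ▸ hadj2).symm)
          exact r1.trans (ih v' w p'' (by omega) hv' hw)
      · have hvm : (v : V) ∈ P \ {q} := ⟨v.2, hv⟩
        have e : (G.induce (P \ {q})).Adj ⟨u, hu⟩ ⟨v, hvm⟩ := h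
        exact e.reachable.trans (ih v w p' (by omega) hvm hw)

theorem key : ∀ (n : ℕ) (P : Set (ℤ × ℤ)), P.Finite → P.Nonempty → P.ncard ≤ n →
    ZeroOrTwoLower P → (triGrid.induce P).Connected → ∃! p, IsLeader P p := by
  intro n
  induction n with
  | zero =>
    intro P hfin hne hcard _ _
    have := (Set.ncard_pos hfin).mpr hne
    omega
  | succ n ih =>
    intro P hfin hne hcard hzt hconn
    -- pick q : max row, then max column
    obtain ⟨b, hb, hbmax⟩ := hfin.toFinset.exists_max_image Prod.snd
      (hfin.toFinset_nonempty.mpr hne)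
    obtain ⟨q, hq, hqmax⟩ := (hfin.toFinset.filter (fun a => a.2 = b.2)).exists_max_image
      Prod.fst ⟨b, by simp [hb]⟩
    rw [Finset.mem_filter] at hq
    have hqP : q ∈ P := hfin.mem_toFinset.mp hq.1
    have hrow : ∀ a ∈ P, a.2 ≤ q.2 := by
      intro a ha
      have := hbmax a (hfin.mem_toFinset.mpr ha)
      omega
    have hrt : ∀ a ∈ P, a.2 = q.2 → a.1 ≤ q.1 := by
      intro a ha h2
      exact hqmax a (by rw [Finset.mem_filter]; exact ⟨hfin.mem_toFinset.mpr ha, by omega⟩)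
    have hA : (q.1 + 1, q.2) ∉ P := fun h => by
      have h1 : q.1 + 1 ≤ q.1 := hrt _ h rfl
      omega
    have hB : (q.1, q.2 + 1) ∉ P := fun h => by
      have h1 : q.2 + 1 ≤ q.2 := hrow _ h
      omega
    have hC : (q.1 - 1, q.2 + 1) ∉ P := fun h => by
      have h1 : q.2 + 1 ≤ q.2 := hrow _ h
      omega
    -- generic facts about P' := P \ {q}
    have hfin' : (P \ {q}).Finite := hfin.diff
    have hcard' : (P \ {q}).ncard ≤ n := by
      have := Set.ncard_diff_singleton_lt_of_mem hqP hfin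
      omega
    have hzt' : ZeroOrTwoLower (P \ {q}) := by
      intro p hp
      rcases hzt p hp.1 with ⟨h1, h2⟩ | ⟨h1, h2⟩
      · left
        have hr := hrow p hp.1
        constructor
        · exact ⟨h1, by
            intro he
            have := congrArg Prod.snd (Set.mem_singleton_iff.mp he)
            simp [lowNbr1] at this
            omega⟩
        · exact ⟨h2, by
            intro he
            have := congrArg Prod.snd (Set.mem_singleton_iff.mp he)
            simp [lowNbr2] at this
            omega⟩
      · right
        exact ⟨fun h => h1 h.1, fun h => h2 h.1⟩
    have hleadlift : ∀ p, p ≠ q → IsLeader P p → IsLeader (P \ {q}) p := by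
      intro p hpq hp
      exact ⟨⟨hp.1, hpq⟩, fun h => hp.2.1 h.1, fun h => hp.2.2.1 h.1,
        fun h => hp.2.2.2.1 h.1, fun h => hp.2.2.2.2 h.1⟩
    rcases hzt q hqP with ⟨hl1, hl2⟩ | ⟨hz1, hz2⟩
    · -- Case B: both lower neighbours occupied
      rw [show lowNbr1 q = (q.1, q.2 - 1) from rfl] at hl1
      rw [show lowNbr2 q = (q.1 + 1, q.2 - 1) from rfl] at hl2
      have hl1q : (q.1, q.2 - 1) ≠ q := fun h => by
        have h1 : q.2 - 1 = q.2 := congrArg Prod.snd h; omega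
      have hl2q : (q.1 + 1, q.2 - 1) ≠ q := fun h => by
        have h1 : q.2 - 1 = q.2 := congrArg Prod.snd h; omega
      have hnbr : ∀ a ∈ P, triGrid.Adj a q →
          a = (q.1 - 1, q.2) ∨ a = (q.1, q.2 - 1) ∨ a = (q.1 + 1, q.2 - 1) := by
        intro a haP hadj
        rcases (adj_iff q a).mp hadj.symm with h | h | h | h | h | h
        · exact absurd (h ▸ haP) hA
        · exact Or.inl h
        · exact absurd (h ▸ haP) hB
        · exact Or.inr (Or.inl h)
        · exact Or.inr (Or.inr h)
        · exact absurd (h ▸ haP) hC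
      have hmid : (q.1, q.2 - 1) ∈ P \ {q} := ⟨hl1, hl1q⟩
      have hhelper : ∀ (a : ℤ × ℤ) (ha : a ∈ P \ {q}), triGrid.Adj a q →
          (triGrid.induce (P \ {q})).Reachable ⟨a, ha⟩ ⟨(q.1, q.2 - 1), hmid⟩ := by
        intro a ha hadj
        rcases hnbr a ha.1 hadj with h | h | h
        · subst h
          have e : (triGrid.induce (P \ {q})).Adj ⟨(q.1 - 1, q.2), ha⟩ ⟨(q.1, q.2 - 1), hmid⟩ := by
            show triGrid.Adj _ _
            rw [adj_iff]
            right; right; right; right; left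
            simp
          exact e.reachable
        · subst h
          exact SimpleGraph.Reachable.refl _
        · subst h
          have e : (triGrid.induce (P \ {q})).Adj ⟨(q.1 + 1, q.2 - 1), ha⟩
              ⟨(q.1, q.2 - 1), hmid⟩ := by
            show triGrid.Adj _ _
            rw [adj_iff]
            right; left
            simp
          exact e.reachable
      have hconn' : (triGrid.induce (P \ {q})).Connected := by
        rw [SimpleGraph.connected_iff]
        refine ⟨?_, ⟨⟨_, hmid⟩⟩⟩
        intro u w
        obtain ⟨p⟩ := hconn.preconnected ⟨u.1, u.2.1⟩ ⟨w.1, w.2.1⟩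
        exact walk_surgery triGrid P q
          (fun a b ha hb haq hbq => (hhelper a ha haq).trans (hhelper b hb hbq).symm)
          p.length _ _ p le_rfl u.2 w.2
      obtain ⟨L, hL, hLu⟩ := ih (P \ {q}) hfin' ⟨_, hmid⟩ hcard' hzt' hconn'
      have hrL := hrow L hL.1.1
      have k1 : (L.1 + 1, L.2) ∉ P := by
        intro h
        by_cases hq1 : (L.1 + 1, L.2) = q
        · have h1 := congrArg Prod.fst hq1
          have h2 := congrArg Prod.snd hq1
          simp at h1 h2
          apply hL.2.2.1
          refine ⟨?_, ?_⟩
          · show (L.1 + 1, L.2 - 1) ∈ P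
            rw [show (L.1 + 1, L.2 - 1) = (q.1, q.2 - 1) from by rw [Prod.ext_iff]; simp; omega]
            exact hl1
          · show (L.1 + 1, L.2 - 1) ≠ q
            intro h'
            have := congrArg Prod.snd h'
            simp at this
            omega
        · exact hL.2.1 ⟨h, hq1⟩
      have k2 : (L.1 + 1, L.2 - 1) ∉ P := by
        intro h
        by_cases hq1 : (L.1 + 1, L.2 - 1) = q
        · have h2 := congrArg Prod.snd hq1
          simp at h2
          omega
        · exact hL.2.2.1 ⟨h, hq1⟩
      have k3 : (L.1, L.2 - 1) ∉ P := by
        intro h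
        by_cases hq1 : (L.1, L.2 - 1) = q
        · have h2 := congrArg Prod.snd hq1
          simp at h2
          omega
        · exact hL.2.2.2.1 ⟨h, hq1⟩
      have k4 : (L.1, L.2 + 1) ∉ P := by
        intro h
        by_cases hq1 : (L.1, L.2 + 1) = q
        · have h1 := congrArg Prod.fst hq1
          have h2 := congrArg Prod.snd hq1
          simp at h1 h2
          apply hL.2.1
          refine ⟨?_, ?_⟩
          · show (L.1 + 1, L.2) ∈ P
            rw [show (L.1 + 1, L.2) = (q.1 + 1, q.2 - 1) from by rw [Prod.ext_iff]; simp; omega]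
            exact hl2
          · show (L.1 + 1, L.2) ≠ q
            intro h'
            have := congrArg Prod.fst h'
            simp at this
            omega
        · exact hL.2.2.2.2 ⟨h, hq1⟩
      refine ⟨L, ⟨hL.1.1, k1, k2, k3, k4⟩, ?_⟩
      intro p hp
      have hpq : p ≠ q := by
        intro h
        subst h
        exact hp.2.2.2.1 hl1
      exact hLu p (hleadlift p hpq hp)
    · -- Case A: zero lower neighbours: q itself is a leader
      rw [show lowNbr1 q = (q.1, q.2 - 1) from rfl] at hz1
      rw [show lowNbr2 q = (q.1 + 1, q.2 - 1) from rfl] at hz2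
      have hlead : IsLeader P q := ⟨hqP, by simpa using hA, by simpa using hz2,
        by simpa using hz1, by simpa using hB⟩
      by_cases hsing : ∀ s ∈ P, s = q
      · exact ⟨q, hlead, fun p hp => hsing p hp.1⟩
      · push_neg at hsing
        obtain ⟨s, hsP, hsq⟩ := hsing
        have hnbr : ∀ a ∈ P, triGrid.Adj a q → a = (q.1 - 1, q.2) := by
          intro a haP hadj
          rcases (adj_iff q a).mp hadj.symm with h | h | h | h | h | h
          · exact absurd (h ▸ haP) hA
          · exact h
          · exact absurd (h ▸ haP) hB
          · exact absurd (h ▸ haP) hz1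
          · exact absurd (h ▸ haP) hz2
          · exact absurd (h ▸ haP) hC
        have hs0P : (q.1 - 1, q.2) ∈ P := by
          obtain ⟨p⟩ := hconn.preconnected ⟨q, hqP⟩ ⟨s, hsP⟩
          cases p with
          | nil => exact absurd rfl hsq
          | cons h p' =>
            rename_i v
            have hadj : triGrid.Adj q (v : ℤ × ℤ) := h
            have := hnbr v.1 v.2 hadj.symm
            rw [← this]
            exact v.2
        have hs0q : (q.1 - 1, q.2) ≠ q := fun h => by
          have h1 : q.1 - 1 = q.1 := congrArg Prod.fst h; omega
        have hs0m : (q.1 - 1, q.2) ∈ P \ {q} := ⟨hs0P, hs0q⟩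
        have hconn' : (triGrid.induce (P \ {q})).Connected := by
          rw [SimpleGraph.connected_iff]
          refine ⟨?_, ⟨⟨_, hs0m⟩⟩⟩
          intro u w
          obtain ⟨p⟩ := hconn.preconnected ⟨u.1, u.2.1⟩ ⟨w.1, w.2.1⟩
          refine walk_surgery triGrid P q ?_ p.length _ _ p le_rfl u.2 w.2
          intro a b ha hb haq hbq
          have h1 := hnbr a ha.1 haq
          have h2 := hnbr b hb.1 hbq
          have : (⟨a, ha⟩ : ↥(P \ {q})) = ⟨b, hb⟩ := Subtype.ext (h1.trans h2.symm)
          rw [this]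
        obtain ⟨L, hL, hLu⟩ := ih (P \ {q}) hfin' ⟨_, hs0m⟩ hcard' hzt' hconn'
        have hs0lead : IsLeader (P \ {q}) (q.1 - 1, q.2) := by
          refine ⟨hs0m, ?_, ?_, ?_, ?_⟩
          · show (q.1 - 1 + 1, q.2) ∉ P \ {q}
            rw [show (q.1 - 1 + 1, q.2) = q from by rw [Prod.ext_iff]; simp]
            exact fun h => h.2 rfl
          · show (q.1 - 1 + 1, q.2 - 1) ∉ P \ {q}
            rw [show (q.1 - 1 + 1, q.2 - 1) = (q.1, q.2 - 1) from by rw [Prod.ext_iff]; simp]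
            exact fun h => hz1 h.1
          · show (q.1 - 1, q.2 - 1) ∉ P \ {q}
            intro h
            rcases hzt _ hs0P with ⟨_, h2⟩ | ⟨h1, _⟩
            · exact hz1 (by
                rw [show lowNbr2 (q.1 - 1, q.2) = (q.1, q.2 - 1) from by
                  simp [lowNbr2]] at h2
                exact h2)
            · exact h1 h.1
          · show (q.1 - 1, q.2 + 1) ∉ P \ {q}
            exact fun h => hC h.1
        have hLs0 : (q.1 - 1, q.2) = L := hLu _ hs0lead
        refine ⟨q, hlead, ?_⟩
        intro p hp
        by_contra hpq
        have : p = L := hLu p (hleadlift p hpq hp)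
        apply hp.2.1
        rw [this, ← hLs0]
        show ((q.1 - 1) + 1, q.2) ∈ P
        rw [show (q.1 - 1 + 1, q.2) = q from by rw [Prod.ext_iff]; simp]
        exact hqP

/-- A final configuration contains exactly one leader. -/
theorem unique_leader (P : Set (ℤ × ℤ)) (hfin : P.Finite) (hne : P.Nonempty)
    (hzt : ZeroOrTwoLower P) (hconn : (triGrid.induce P).Connected) :
    ∃! p, IsLeader P p :=
  key P.ncard P hfin hne le_rfl hzt hconn
end

section
/- Let P ⊆ ℤ² be a finite nonempty connected configuration in the triangular grid (axial coordinates, six-neighbour adjacency) in which every particle has either zero or two occupied lower neighbours. Let p be the rightmost particle in the lowest occupied row. Then p has no occupied neighbour in directions 0, 1, 2 or 5; i.e., p is a leader. -/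
/-- The rightmost particle in the lowest occupied row of a final configuration is a leader. -/
theorem lowest_rightmost_is_leader (P : Set (ℤ × ℤ)) (hfin : P.Finite) (hne : P.Nonempty)
    (hzt : ZeroOrTwoLower P) (hconn : (triGrid.induce P).Connected)
    (p : ℤ × ℤ) (hp : p ∈ P) (hlow : ∀ q ∈ P, p.2 ≤ q.2)
    (hright : ∀ q ∈ P, q.2 = p.2 → q.1 ≤ p.1) :
    IsLeader P p := by
  have h0 : (p.1 + 1, p.2) ∉ P := fun h => by
    have := hright _ h rfl; omega
  refine ⟨hp, h0, ?_, ?_, ?_⟩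
  · intro h; have := hlow _ h; omega
  · intro h; have := hlow _ h; omega
  · intro h
    rcases hzt _ h with ⟨h1, h2⟩ | ⟨h1, h2⟩
    · exact h0 (by simpa [lowNbr2] using h2)
    · exact h1 (by simpa [lowNbr1] using hp)
end
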